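/- arXiv:1804.04787 — 5 statements merged into one kernel-verified Lean document; each statement's English description precedes it below -/
import Mathlib

section
/- For every positive integer n, the chromatic number of the tournament A_n equals n. -/
/-- A tournament: a finite vertex type with an orientation of each pair of
distinct vertices. -/
structure Tournament : Type 1 where
  V : Type
  [fintypeV : Fintype V]
  adj : V → V → Prop
  irrefl : ∀ v, ¬ adj v v
  total : ∀ u v, u ≠ v → adj u v ∨ adj v u
  asymm : ∀ u v, adj u v → ¬ adj v u

attribute [instance] Tournament.fintypeV

namespace Tournament

/-- A set of vertices is transitive: the induced subtournament has no directed
cycle (equivalently, the adjacency relation is transitive on it). -/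
def IsTransSet (T : Tournament) (S : Set T.V) : Prop :=
  ∀ a ∈ S, ∀ b ∈ S, ∀ c ∈ S, T.adj a b → T.adj b c → T.adj a c

/-- The chromatic number of a tournament: least number of transitive sets
partitioning the vertex set. -/
noncomputable def chromNum (T : Tournament) : ℕ :=
  sInf {k | ∃ c : T.V → Fin k, ∀ i, T.IsTransSet {v | c v = i}}

/-- `T.Contains S`: `S` is isomorphic to a subtournament of `T`. -/
def Contains (T S : Tournament) : Prop :=
  ∃ f : S.V → T.V, Function.Injective f ∧ ∀ u v, S.adj u v ↔ T.adj (f u) (f v)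

/-- `T.Iso S`: `T` and `S` are isomorphic tournaments. -/
def Iso (T S : Tournament) : Prop :=
  ∃ f : S.V → T.V, Function.Bijective f ∧ ∀ u v, S.adj u v ↔ T.adj (f u) (f v)

/-- A set of tournaments is heroic if excluding all its members bounds the
chromatic number. -/
def Heroic (H : Set Tournament) : Prop :=
  ∃ c, ∀ T : Tournament, (∀ X ∈ H, ¬ T.Contains X) → T.chromNum ≤ c

/-- A tournament is a hero if `{H}` is heroic. -/
def IsHero (H : Tournament) : Prop :=
  ∃ c, ∀ T : Tournament, ¬ T.Contains H → T.chromNum ≤ c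

/-- A class of tournaments is hereditary if closed under subtournaments up to
isomorphism. -/
def Hereditary (C : Set Tournament) : Prop :=
  ∀ T ∈ C, ∀ S : Tournament, T.Contains S → S ∈ C

def StronglyConnected (T : Tournament) : Prop :=
  ∀ u v : T.V, Relation.ReflTransGen T.adj u v

/-- A transitive tournament (no directed cycle). -/
def IsTransTour (T : Tournament) : Prop :=
  ∀ a b c : T.V, T.adj a b → T.adj b c → T.adj a c

/-- Direction rule for Δ-partitions with 0-based part-indices (a part is at an
odd position in the 1-based sense iff its 0-based index is even).
`deltaDir i j` holds iff part `i` is complete to part `j`: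
for `i < j`, part `j` beats part `i` iff both positions are (1-based) odd. -/
def deltaDir {m : ℕ} (i j : Fin m) : Prop :=
  (i < j ∧ ¬ (Even i.1 ∧ Even j.1)) ∨ (j < i ∧ (Even i.1 ∧ Even j.1))

theorem deltaDir_irrefl {m : ℕ} (i : Fin m) : ¬ deltaDir i i := by
  rintro (⟨h, _⟩ | ⟨h, _⟩) <;> exact lt_irrefl _ h

theorem deltaDir_total {m : ℕ} {i j : Fin m} (h : i ≠ j) : deltaDir i j ∨ deltaDir j i := by
  rcases lt_or_gt_of_ne h with hl | hl
  · by_cases he : Even i.1 ∧ Even j.1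
    · exact Or.inr (Or.inr ⟨hl, he.2, he.1⟩)
    · exact Or.inl (Or.inl ⟨hl, he⟩)
  · by_cases he : Even i.1 ∧ Even j.1
    · exact Or.inl (Or.inr ⟨hl, he⟩)
    · exact Or.inr (Or.inl ⟨hl, fun hc => he ⟨hc.2, hc.1⟩⟩)

theorem deltaDir_asymm {m : ℕ} {i j : Fin m} (h : deltaDir i j) : ¬ deltaDir j i := by
  rcases h with ⟨h1, h2⟩ | ⟨h1, h2⟩ <;> rintro (⟨g1, g2⟩ | ⟨g1, g2⟩)
  · exact lt_asymm h1 g1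
  · exact h2 ⟨g2.2, g2.1⟩
  · exact g2 ⟨h2.2, h2.1⟩
  · exact lt_asymm h1 g1

/-- The tournament `Δ(F 0, F 1, …, F (m-1))` given by a Δ-partition rule:
within a part use the part's edges; between parts, edges follow `deltaDir`.
For `m = 3` this is the trisection `Δ(A,B,C)` (`X ⇒ Y`, `Y ⇒ Z`, `Z ⇒ X`),
and for `m = 2` it is `F 0 ⇒ F 1`. -/
def deltaSum {m : ℕ} (F : Fin m → Tournament) : Tournament where
  V := (i : Fin m) × (F i).V
  adj x y := deltaDir x.1 y.1 ∨
    ∃ (i : Fin m) (u v : (F i).V), (F i).adj u v ∧ x = ⟨i, u⟩ ∧ y = ⟨i, v⟩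
  irrefl := by
    rintro x (h | ⟨i, u, v, hadj, rfl, h2⟩)
    · exact deltaDir_irrefl _ h
    · injection h2 with h h'
      subst h'
      exact (F i).irrefl u hadj
  total := by
    rintro ⟨i, a⟩ ⟨j, b⟩ hne
    by_cases hij : i = j
    · subst hij
      have hab : a ≠ b := fun h => hne (by rw [h])
      rcases (F i).total a b hab with h | h
      · exact Or.inl (Or.inr ⟨i, a, b, h, rfl, rfl⟩)
      · exact Or.inr (Or.inr ⟨i, b, a, h, rfl, rfl⟩)
    · rcases deltaDir_total hij with h | h
      · exact Or.inl (Or.inl h)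
      · exact Or.inr (Or.inl h)
  asymm := by
    rintro x y hxy hyx
    rcases hxy with h | ⟨i, u, v, hadj, rfl, rfl⟩
    · rcases hyx with g | ⟨j, p, q, gadj, rfl, rfl⟩
      · exact deltaDir_asymm h g
      · exact deltaDir_irrefl _ h
    · rcases hyx with g | ⟨j, p, q, gadj, h1, h2⟩
      · exact deltaDir_irrefl _ g
      · injection h1 with hij hp
        subst hij
        obtain rfl := eq_of_heq hp
        injection h2 with h h'
        subst h'
        exact (F i).asymm u v hadj gadj

/-- The one-vertex tournament `I`. -/
def oneTour : Tournament where
  V := Unit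
  adj _ _ := False
  irrefl := fun _ h => h
  total := fun u v h => (h (Subsingleton.elim u v)).elim
  asymm := fun _ _ h => h.elim

/-- The transitive tournament `L k` on `k` vertices. -/
def linTour (k : ℕ) : Tournament where
  V := Fin k
  adj i j := i < j
  irrefl := fun v => lt_irrefl v
  total := fun _ _ h => lt_or_gt_of_ne h
  asymm := fun _ _ h => lt_asymm h

/-- `Dtour n` is the tournament `D_n`: `D_1 = I`, `D_n = Δ(I, D_{n-1}, D_{n-1})`. -/
def Dtour : ℕ → Tournament
  | 0 => oneTour
  | 1 => oneTour
  | n + 2 => deltaSum ![oneTour, Dtour (n + 1), Dtour (n + 1)]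

/-- `Atour n` is the tournament `A_n`: `A_1 = I`, and `A_n` is a Δ-sum with
`2n-1` parts, the (1-based) odd positions being single vertices and the even
positions copies of `A_{n-1}`. -/
def Atour : ℕ → Tournament
  | 0 => oneTour
  | 1 => oneTour
  | n + 2 =>
      deltaSum fun t : Fin (2 * (n + 2) - 1) => if Even t.1 then oneTour else Atour (n + 1)

/-- `Utour n` is the tournament `U_n = Δ(I, I, …, I)` with `2n-1` one-vertex parts. -/
def Utour (n : ℕ) : Tournament :=
  deltaSum fun _ : Fin (2 * n - 1) => oneTour

/-- `𝒟`: the closure of `{D_n : n ≥ 1}` under subtournaments up to isomorphism. -/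
def classD : Set Tournament :=
  {T | ∃ n : ℕ, 1 ≤ n ∧ (Dtour n).Contains T}

/-- `𝒜`: the closure of `{A_n : n ≥ 1}` under subtournaments up to isomorphism. -/
def classA : Set Tournament :=
  {T | ∃ n : ℕ, 1 ≤ n ∧ (Atour n).Contains T}

/-- `Δ₂ = Δ(L₂, L₂, L₂)`. -/
def delta2 : Tournament :=
  deltaSum ![linTour 2, linTour 2, linTour 2]

/-- The tournament `N`. -/
def Ntour : Tournament where
  V := Fin 5
  adj i j :=
    ![![false, true, false, true, false],
      ![false, false, true, true, true],
      ![true, false, false, true, true],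
      ![false, false, false, false, true],
      ![true, false, false, false, false]] i j = true
  irrefl := by decide
  total := by decide
  asymm := by decide

/-- The tournament `S₃`: `v_i → v_j` iff `j - i ∈ {1, 2} (mod 5)`. -/
def Stour3 : Tournament where
  V := Fin 5
  adj i j := (j.1 + 5 - i.1) % 5 = 1 ∨ (j.1 + 5 - i.1) % 5 = 2
  irrefl := by decide
  total := by decide
  asymm := by decide

/-- A vertex `v` outside `S` is mixed on `S` if it has both an out-neighbor and
an in-neighbor in `S`. -/
def MixedOn (T : Tournament) (v : T.V) (S : Set T.V) : Prop :=
  (∃ s ∈ S, T.adj v s) ∧ (∃ s ∈ S, T.adj s v)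

/-- A homogeneous set: `1 < |S| < |V(T)|` and no vertex outside `S` is mixed on `S`. -/
def Homog (T : Tournament) (S : Set T.V) : Prop :=
  1 < S.ncard ∧ S.ncard < Nat.card T.V ∧ ∀ v ∉ S, ¬ T.MixedOn v S

/-- A prime tournament has no homogeneous set. -/
def Prime (T : Tournament) : Prop := ¬ ∃ S : Set T.V, T.Homog S

/-- `P` is a Δ-partition of `T` with parts `P 0, …, P (m-1)`:
the parts are nonempty, partition `V(T)`, and all edges between distinct parts
follow the rule `deltaDir`. -/
def IsDeltaPartition (T : Tournament) {m : ℕ} (P : Fin m → Set T.V) : Prop :=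
  (∀ i, (P i).Nonempty) ∧
  (∀ v : T.V, ∃! i, v ∈ P i) ∧
  (∀ i j, i ≠ j → ∀ u ∈ P i, ∀ v ∈ P j, (T.adj u v ↔ deltaDir i j))

/-- The induced subtournament on a set of vertices. -/
noncomputable def induce (T : Tournament) (S : Set T.V) : Tournament where
  V := ↥S
  fintypeV := (Set.toFinite S).fintype
  adj u v := T.adj u.1 v.1
  irrefl := fun v => T.irrefl v.1
  total := fun u v h => T.total u.1 v.1 (fun hh => h (Subtype.ext hh))
  asymm := fun u v h => T.asymm u.1 v.1 h

/-- `u` and `v` are joined by an edge of the backedge graph of the ordering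
given by the list `l`: the `T`-edge between them goes backwards in `l`. -/
def BackAdj (T : Tournament) (l : List T.V) (u v : T.V) : Prop :=
  (T.adj u v ∧ [v, u].Sublist l) ∨ (T.adj v u ∧ [u, v].Sublist l)

/-- The backedge graph `B_σ(T)` of the ordering `σ = l`. -/
def backGraph (T : Tournament) (l : List T.V) : SimpleGraph T.V where
  Adj u v := T.BackAdj l u v
  symm := by
    constructor
    intro u v h
    rcases h with ⟨h, s⟩ | ⟨h, s⟩
    · exact Or.inr ⟨h, s⟩
    · exact Or.inl ⟨h, s⟩
  loopless := by
    constructor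
    intro v h
    rcases h with ⟨h, _⟩ | ⟨h, _⟩ <;> exact T.irrefl v h

/-- Forest orderings: a one-element ordering is a forest ordering, and the
concatenation `l₁ ++ l₂` of two nonempty forest orderings is one provided no
two edges of the backedge graph going between `l₁` and `l₂` lie in the same
connected component of the backedge graph. -/
inductive IsForestOrdering (T : Tournament) : List T.V → Prop
  | single (v : T.V) : IsForestOrdering T [v]
  | split (l₁ l₂ : List T.V) (h₁ : l₁ ≠ []) (h₂ : l₂ ≠ [])
      (hsep : ∀ a ∈ l₁, ∀ b ∈ l₂, ∀ c ∈ l₁, ∀ d ∈ l₂,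
        T.BackAdj (l₁ ++ l₂) a b → T.BackAdj (l₁ ++ l₂) c d →
        Relation.ReflTransGen (T.BackAdj (l₁ ++ l₂)) a c → a = c ∧ b = d)
      (f₁ : IsForestOrdering T l₁) (f₂ : IsForestOrdering T l₂) :
      IsForestOrdering T (l₁ ++ l₂)

/-- A forest tournament: one admitting a forest ordering of its vertex set. -/
def IsForestTournament (T : Tournament) : Prop :=
  ∃ l : List T.V, l.Nodup ∧ (∀ v, v ∈ l) ∧ IsForestOrdering T l

/-- The set of ordered pairs realizing backedges between `l₁` and `l₂`. -/
def splitEdges (T : Tournament) (l l₁ l₂ : List T.V) : Set (T.V × T.V) :=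
  {p | p.1 ∈ l₁ ∧ p.2 ∈ l₂ ∧ T.BackAdj l p.1 p.2}

/-- The thickness of the backedge graph of `l`: the minimum number of backedges
crossing a split of `l` into two nonempty intervals. -/
noncomputable def thickness (T : Tournament) (l : List T.V) : ℕ :=
  sInf {k | ∃ l₁ l₂ : List T.V, l = l₁ ++ l₂ ∧ l₁ ≠ [] ∧ l₂ ≠ [] ∧
    k = (T.splitEdges l l₁ l₂).ncard}

/-- The "length" `|φ x - φ y|` of an unordered pair under `φ`. -/
def phiLen {α : Type} (φ : α → ℕ) : Sym2 α → ℕ :=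
  Sym2.lift ⟨fun u v => max (φ u) (φ v) - min (φ u) (φ v), fun u v => by
    show max (φ u) (φ v) - min (φ u) (φ v) = max (φ v) (φ u) - min (φ v) (φ u)
    rw [max_comm (φ u) (φ v), min_comm (φ u) (φ v)]⟩

/-- The backedge graph of the ordering `σ_φ` induced by `φ`. -/
def backGraphPhi (T : Tournament) (φ : T.V → ℕ) : SimpleGraph T.V where
  Adj u v := (T.adj u v ∧ φ v < φ u) ∨ (T.adj v u ∧ φ u < φ v)
  symm := by
    constructor
    intro u v h
    rcases h with h | h
    · exact Or.inr h
    · exact Or.inl h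
  loopless := by
    constructor
    intro v h
    rcases h with ⟨_, h⟩ | ⟨_, h⟩ <;> exact lt_irrefl _ h

/-- Two distinct edges `e`, `f` of `B_{σ_φ}(T)` are `(r,s)`-comparable under `φ`:
some path with at most `s` edges contains both, and `1/r ≤ φ(e)/φ(f) ≤ r`. -/
def Comparable (T : Tournament) (φ : T.V → ℕ) (r s : ℕ) (e f : Sym2 T.V) : Prop :=
  e ≠ f ∧
  (∃ (a b : T.V) (p : (T.backGraphPhi φ).Walk a b),
      p.IsPath ∧ p.length ≤ s ∧ e ∈ p.edges ∧ f ∈ p.edges) ∧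
  phiLen φ e ≤ r * phiLen φ f ∧ phiLen φ f ≤ r * phiLen φ e

/-- The class `𝒞_{(r,s)}`. -/
def classC (r s : ℕ) : Set Tournament :=
  {T | ∃ φ : T.V → ℕ, (∀ v, 0 < φ v) ∧ Function.Injective φ ∧
    ∀ e ∈ (T.backGraphPhi φ).edgeSet, ∀ f ∈ (T.backGraphPhi φ).edgeSet,
      ¬ Comparable T φ r s e f}

/-- `φ` is `r`-incomparable: it is an injective positive labelling such that any
two distinct edges of `B_{σ_φ}(T)` in the same connected component have length
ratio greater than `r` (or less than `1/r`). -/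
def RIncomp (T : Tournament) (φ : T.V → ℕ) (r : ℕ) : Prop :=
  (∀ v, 0 < φ v) ∧ Function.Injective φ ∧
  ∀ e ∈ (T.backGraphPhi φ).edgeSet, ∀ f ∈ (T.backGraphPhi φ).edgeSet, e ≠ f →
    (∃ a b, a ∈ e ∧ b ∈ f ∧ (T.backGraphPhi φ).Reachable a b) →
    (r * phiLen φ f < phiLen φ e ∨ r * phiLen φ e < phiLen φ f)

/-- `l` is an ordering of the vertex set of `T`. -/
def IsOrdering (T : Tournament) (l : List T.V) : Prop :=
  l.Nodup ∧ ∀ v, v ∈ l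

/-- The ordering `l` is incomparable: for every `r ≥ 1` there is an
`r`-incomparable `φ` with `σ_φ = l` (i.e. `φ` strictly increasing along `l`). -/
def IsIncompOrdering (T : Tournament) (l : List T.V) : Prop :=
  ∀ r : ℕ, 0 < r → ∃ φ : T.V → ℕ, RIncomp T φ r ∧ l.Pairwise (fun u v => φ u < φ v)

end Tournament
namespace Tournament

lemma adj_cast {A B : Tournament} (h : A = B) (u v : A.V) :
    A.adj u v ↔ B.adj (cast (congrArg Tournament.V h) u) (cast (congrArg Tournament.V h) v) := by
  subst h; rfl

lemma deltaSum_adj_same {m : ℕ} {F : Fin m → Tournament} (i : Fin m) (u v : (F i).V) :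
    (deltaSum F).adj ⟨i, u⟩ ⟨i, v⟩ ↔ (F i).adj u v := by
  constructor
  · rintro (h | ⟨j, p, q, h, e1, e2⟩)
    · exact absurd h (deltaDir_irrefl i)
    · obtain ⟨h1, h2⟩ := Sigma.mk.inj_iff.mp e1
      subst h1
      obtain rfl := eq_of_heq h2
      obtain ⟨-, hq⟩ := Sigma.mk.inj_iff.mp e2
      exact (eq_of_heq hq) ▸ h
  · intro h; exact Or.inr ⟨i, u, v, h, rfl, rfl⟩

lemma deltaSum_adj_ne {m : ℕ} {F : Fin m → Tournament} {i j : Fin m} (hij : i ≠ j)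
    (u : (F i).V) (v : (F j).V) :
    (deltaSum F).adj ⟨i, u⟩ ⟨j, v⟩ ↔ deltaDir i j := by
  constructor
  · rintro (h | ⟨k, p, q, h, e1, e2⟩)
    · exact h
    · exact absurd ((congrArg Sigma.fst e1).trans (congrArg Sigma.fst e2).symm) hij
  · intro h; exact Or.inl h

lemma chromNum_set_nonempty (T : Tournament) :
    {k | ∃ c : T.V → Fin k, ∀ i, T.IsTransSet {v | c v = i}}.Nonempty := by
  refine ⟨Fintype.card T.V, Fintype.equivFin T.V, ?_⟩
  intro i a ha b hb c hc hab _
  have hab' : a = b := (Fintype.equivFin T.V).injective (ha.trans hb.symm)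
  subst hab'
  exact absurd hab (T.irrefl a)

lemma chromNum_le (T : Tournament) {k : ℕ} (c : T.V → Fin k)
    (h : ∀ i, T.IsTransSet {v | c v = i}) : T.chromNum ≤ k :=
  Nat.sInf_le ⟨c, h⟩

lemma exists_coloring_eq (T : Tournament) {k : ℕ} (h : T.chromNum = k) :
    ∃ c : T.V → Fin k, ∀ i, T.IsTransSet {v | c v = i} := by
  subst h; exact Nat.sInf_mem (chromNum_set_nonempty T)

lemma chromNum_oneTour : oneTour.chromNum = 1 := by
  apply le_antisymm
  · exact chromNum_le _ (fun _ => 0) (fun i a _ b _ c _ hab _ => hab.elim)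
  · refine le_csInf (chromNum_set_nonempty _) ?_
    rintro k ⟨c, -⟩
    rcases Nat.eq_zero_or_pos k with rfl | h
    · exact (c ()).elim0
    · exact h

/-- The part function of the Δ-sum defining `Atour (m+2)`. -/
def AtF (m : ℕ) : Fin (2 * (m + 2) - 1) → Tournament :=
  fun t => if Even t.1 then oneTour else Atour (m + 1)

lemma Atour_succ_succ (m : ℕ) : Atour (m + 2) = deltaSum (AtF m) := rfl

lemma AtF_odd {m : ℕ} {t : Fin (2 * (m + 2) - 1)} (ht : ¬ Even t.1) :
    AtF m t = Atour (m + 1) := if_neg ht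

lemma AtF_even {m : ℕ} {t : Fin (2 * (m + 2) - 1)} (ht : Even t.1) :
    AtF m t = oneTour := if_pos ht

/-- From a part vertex to a vertex of `Atour (m+1)`. -/
def oddInv (m : ℕ) (t : Fin (2 * (m + 2) - 1)) (ht : ¬ Even t.1) :
    (AtF m t).V → (Atour (m + 1)).V :=
  cast (congrArg Tournament.V (AtF_odd ht))

/-- From a vertex of `Atour (m+1)` into an odd part. -/
def oddCast (m : ℕ) (t : Fin (2 * (m + 2) - 1)) (ht : ¬ Even t.1) :
    (Atour (m + 1)).V → (AtF m t).V :=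
  cast (congrArg Tournament.V (AtF_odd ht).symm)

/-- The unique vertex of an even part. -/
def evenVert (m : ℕ) (t : Fin (2 * (m + 2) - 1)) (ht : Even t.1) : (AtF m t).V :=
  cast (congrArg Tournament.V (AtF_even ht).symm) ()

lemma oddInv_adj {m : ℕ} {t : Fin (2 * (m + 2) - 1)} (ht : ¬ Even t.1)
    (u v : (AtF m t).V) :
    (deltaSum (AtF m)).adj ⟨t, u⟩ ⟨t, v⟩ ↔
      (Atour (m + 1)).adj (oddInv m t ht u) (oddInv m t ht v) :=
  (deltaSum_adj_same t u v).trans (adj_cast (AtF_odd ht) u v)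

lemma oddCast_adj {m : ℕ} {t : Fin (2 * (m + 2) - 1)} (ht : ¬ Even t.1)
    (u v : (Atour (m + 1)).V) :
    (Atour (m + 1)).adj u v ↔
      (deltaSum (AtF m)).adj ⟨t, oddCast m t ht u⟩ ⟨t, oddCast m t ht v⟩ :=
  (adj_cast (AtF_odd ht).symm u v).trans (deltaSum_adj_same t _ _).symm

lemma even_no_adj {m : ℕ} {t : Fin (2 * (m + 2) - 1)} (ht : Even t.1)
    (u v : (AtF m t).V) : ¬ (deltaSum (AtF m)).adj ⟨t, u⟩ ⟨t, v⟩ := by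
  intro h
  have h' := (deltaSum_adj_same t u v).mp h
  exact ((adj_cast (AtF_even ht) u v).mp h')

lemma dir_odd {m : ℕ} {i k : Fin (2 * (m + 2) - 1)} (h : ¬ Even i.1)
    (hd : deltaDir i k) : i < k := by
  rcases hd with ⟨h1, _⟩ | ⟨_, h2, _⟩
  · exact h1
  · exact absurd h2 h

lemma mk_dir_odd {m : ℕ} {i k : Fin (2 * (m + 2) - 1)} (h : ¬ Even i.1)
    (hlt : i < k) : deltaDir i k :=
  Or.inl ⟨hlt, fun he => h he.1⟩

lemma mk_dir_odd' {m : ℕ} {i k : Fin (2 * (m + 2) - 1)} (h : ¬ Even k.1)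
    (hlt : i < k) : deltaDir i k :=
  Or.inl ⟨hlt, fun he => h he.2⟩

lemma dir_even {m : ℕ} {i k : Fin (2 * (m + 2) - 1)} (hi : Even i.1) (hk : Even k.1)
    (hd : deltaDir i k) : k < i := by
  rcases hd with ⟨_, h2⟩ | ⟨h1, _⟩
  · exact absurd ⟨hi, hk⟩ h2
  · exact h1

lemma Atour_ub (m : ℕ) (IH : (Atour (m + 1)).chromNum = m + 1) :
    (Atour (m + 2)).chromNum ≤ m + 2 := by
  obtain ⟨c', hc'⟩ := exists_coloring_eq _ IH
  rw [Atour_succ_succ]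
  refine chromNum_le _ (fun x =>
    if h : Even x.1.1 then Fin.last (m + 1)
    else (c' (oddInv m x.1 h x.2)).castSucc) ?_
  intro i
  rcases Fin.eq_castSucc_or_eq_last i with ⟨j, rfl⟩ | rfl
  · -- class of castSucc j : odd parts
    rintro ⟨ta, va⟩ ha ⟨tb, vb⟩ hb ⟨tc, vc⟩ hc hab hbc
    change _ = _ at ha hb hc
    have hOa : ¬ Even ta.1 := by
      intro h; rw [dif_pos h] at ha
      exact absurd ha.symm (Fin.castSucc_lt_last j).ne
    have hOb : ¬ Even tb.1 := by
      intro h; rw [dif_pos h] at hb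
      exact absurd hb.symm (Fin.castSucc_lt_last j).ne
    have hOc : ¬ Even tc.1 := by
      intro h; rw [dif_pos h] at hc
      exact absurd hc.symm (Fin.castSucc_lt_last j).ne
    rw [dif_neg hOa] at ha
    rw [dif_neg hOb] at hb
    rw [dif_neg hOc] at hc
    by_cases hac : ta = tc
    · -- then all three parts equal (else strict inequalities force ta < tc)
      subst hac
      by_cases h1 : ta = tb
      · subst h1
        rw [oddInv_adj hOa] at hab hbc ⊢
        exact hc' j _ (Fin.castSucc_injective _ ha) _ (Fin.castSucc_injective _ hb)
          _ (Fin.castSucc_injective _ hc) hab hbc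
      · have d1 : deltaDir ta tb := (deltaSum_adj_ne h1 va vb).mp hab
        have d2 : deltaDir tb ta := (deltaSum_adj_ne (Ne.symm h1) vb vc).mp hbc
        exact absurd d2 (deltaDir_asymm d1)
    · -- ta ≠ tc : show ta < tc
      have hlt : ta < tc := by
        by_cases h1 : ta = tb
        · subst h1
          have h2 : ta ≠ tc := hac
          exact dir_odd hOb ((deltaSum_adj_ne h2 vb vc).mp hbc)
        · have l1 : ta < tb := dir_odd hOa ((deltaSum_adj_ne h1 va vb).mp hab)
          by_cases h2 : tb = tc
          · exact h2 ▸ l1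
          · exact l1.trans (dir_odd hOb ((deltaSum_adj_ne h2 vb vc).mp hbc))
      exact (deltaSum_adj_ne hac va vc).mpr (mk_dir_odd hOa hlt)
  · -- class of last : even parts
    rintro ⟨ta, va⟩ ha ⟨tb, vb⟩ hb ⟨tc, vc⟩ hc hab hbc
    change _ = _ at ha hb hc
    have hEa : Even ta.1 := by
      by_contra h; rw [dif_neg h] at ha
      exact absurd ha (Fin.castSucc_lt_last _).ne
    have hEb : Even tb.1 := by
      by_contra h; rw [dif_neg h] at hb
      exact absurd hb (Fin.castSucc_lt_last _).ne
    have hEc : Even tc.1 := by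
      by_contra h; rw [dif_neg h] at hc
      exact absurd hc (Fin.castSucc_lt_last _).ne
    have h1 : ta ≠ tb := by rintro rfl; exact even_no_adj hEa va vb hab
    have h2 : tb ≠ tc := by rintro rfl; exact even_no_adj hEb vb vc hbc
    have l1 : tb < ta := dir_even hEa hEb ((deltaSum_adj_ne h1 va vb).mp hab)
    have l2 : tc < tb := dir_even hEb hEc ((deltaSum_adj_ne h2 vb vc).mp hbc)
    have hac : ta ≠ tc := fun h => absurd (h ▸ (l2.trans l1)) (lt_irrefl _)
    exact (deltaSum_adj_ne hac va vc).mpr (Or.inr ⟨l2.trans l1, hEa, hEc⟩)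

lemma Atour_lb (m : ℕ) (IH : (Atour (m + 1)).chromNum = m + 1) :
    m + 2 ≤ (Atour (m + 2)).chromNum := by
  rw [Atour_succ_succ]
  -- it suffices to show there is no coloring with m+1 colors
  have hmain : ∀ c : (deltaSum (AtF m)).V → Fin (m + 1),
      ¬ ∀ i, (deltaSum (AtF m)).IsTransSet {v | c v = i} := by
    intro c hc
    -- Step A: every color appears in every odd part
    have hsurj : ∀ (t : Fin (2 * (m + 2) - 1)) (ht : ¬ Even t.1) (i : Fin (m + 1)),
        ∃ v : (AtF m t).V, c ⟨t, v⟩ = i := by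
      intro t ht i
      by_contra hno
      push_neg at hno
      have hne : ∀ w : (Atour (m + 1)).V, c ⟨t, oddCast m t ht w⟩ ≠ i :=
        fun w => hno (oddCast m t ht w)
      have hvlt : ∀ w : (Atour (m + 1)).V,
          (if (c ⟨t, oddCast m t ht w⟩).1 < i.1 then (c ⟨t, oddCast m t ht w⟩).1
           else (c ⟨t, oddCast m t ht w⟩).1 - 1) < m := by
        intro w
        have h1 : (c ⟨t, oddCast m t ht w⟩).1 ≠ i.1 := fun h => hne w (Fin.ext h)
        have h2 : (c ⟨t, oddCast m t ht w⟩).1 < m + 1 := (c ⟨t, oddCast m t ht w⟩).2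
        have h3 : i.1 < m + 1 := i.2
        split <;> omega
      have hd : (Atour (m + 1)).chromNum ≤ m := by
        refine chromNum_le _ (fun w => (⟨_, hvlt w⟩ : Fin m)) ?_
        intro j a ha b hb d hd hab hbd
        simp only [Set.mem_setOf_eq, Fin.mk.injEq] at ha hb hd
        have hinj : ∀ u v : (Atour (m + 1)).V,
            (if (c ⟨t, oddCast m t ht u⟩).1 < i.1 then (c ⟨t, oddCast m t ht u⟩).1
             else (c ⟨t, oddCast m t ht u⟩).1 - 1) =
            (if (c ⟨t, oddCast m t ht v⟩).1 < i.1 then (c ⟨t, oddCast m t ht v⟩).1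
             else (c ⟨t, oddCast m t ht v⟩).1 - 1) →
            c ⟨t, oddCast m t ht v⟩ = c ⟨t, oddCast m t ht u⟩ := by
          intro u v h
          have h1 : (c ⟨t, oddCast m t ht u⟩).1 ≠ i.1 := fun h' => hne u (Fin.ext h')
          have h2 : (c ⟨t, oddCast m t ht v⟩).1 ≠ i.1 := fun h' => hne v (Fin.ext h')
          apply Fin.ext
          split at h <;> split at h <;> omega
        have e1 : c ⟨t, oddCast m t ht b⟩ = c ⟨t, oddCast m t ht a⟩ :=
          hinj a b (congrArg Fin.val (ha.trans hb.symm))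
        have e2 : c ⟨t, oddCast m t ht d⟩ = c ⟨t, oddCast m t ht a⟩ :=
          hinj a d (congrArg Fin.val (ha.trans hd.symm))
        rw [oddCast_adj ht (t := t)] at hab hbd ⊢
        exact hc (c ⟨t, oddCast m t ht a⟩) _ rfl _ e1 _ e2 hab hbd
      omega
    -- Step B: pigeonhole on the m+2 singleton parts
    have hb2 : ∀ k : Fin (m + 2), 2 * k.1 < 2 * (m + 2) - 1 := by
      intro k; have := k.2; omega
    have hEk : ∀ k : Fin (m + 2), Even ((⟨2 * k.1, hb2 k⟩ : Fin (2 * (m + 2) - 1)).1) :=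
      fun k => even_two_mul _
    have notE : ∀ a : ℕ, ¬ Even (2 * a + 1) := by
      intro a h
      exact (Nat.even_add_one.mp h) (even_two_mul a)
    have main : ∀ a b : Fin (m + 2), a.1 < b.1 →
        c ⟨⟨2 * a.1, hb2 a⟩, evenVert m _ (hEk a)⟩ =
          c ⟨⟨2 * b.1, hb2 b⟩, evenVert m _ (hEk b)⟩ → False := by
      intro a b hlt heq
      have hq : 2 * a.1 + 1 < 2 * (m + 2) - 1 := by have := b.2; omega
      obtain ⟨v, hv⟩ := hsurj ⟨2 * a.1 + 1, hq⟩ (notE a.1)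
        (c ⟨⟨2 * a.1, hb2 a⟩, evenVert m _ (hEk a)⟩)
      have h1 : (⟨2 * a.1, hb2 a⟩ : Fin (2 * (m + 2) - 1)) ≠ ⟨2 * a.1 + 1, hq⟩ := by
        intro h; rw [Fin.mk.injEq] at h; omega
      have h2 : (⟨2 * a.1 + 1, hq⟩ : Fin (2 * (m + 2) - 1)) ≠ ⟨2 * b.1, hb2 b⟩ := by
        intro h; rw [Fin.mk.injEq] at h; omega
      have h3 : (⟨2 * a.1, hb2 a⟩ : Fin (2 * (m + 2) - 1)) ≠ ⟨2 * b.1, hb2 b⟩ := by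
        intro h; rw [Fin.mk.injEq] at h; omega
      have adj1 : (deltaSum (AtF m)).adj ⟨⟨2 * a.1, hb2 a⟩, evenVert m _ (hEk a)⟩
          ⟨⟨2 * a.1 + 1, hq⟩, v⟩ :=
        (deltaSum_adj_ne h1 _ _).mpr (mk_dir_odd' (notE a.1) (Fin.mk_lt_mk.mpr (by omega)))
      have adj2 : (deltaSum (AtF m)).adj ⟨⟨2 * a.1 + 1, hq⟩, v⟩
          ⟨⟨2 * b.1, hb2 b⟩, evenVert m _ (hEk b)⟩ :=
        (deltaSum_adj_ne h2 _ _).mpr (mk_dir_odd (notE a.1) (Fin.mk_lt_mk.mpr (by omega)))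
      have adj3 := hc (c ⟨⟨2 * a.1, hb2 a⟩, evenVert m _ (hEk a)⟩) _ rfl _ hv _ heq.symm
        adj1 adj2
      have hd := (deltaSum_adj_ne h3 _ _).mp adj3
      rcases hd with ⟨_, hno⟩ | ⟨hlt', _⟩
      · exact hno ⟨hEk a, hEk b⟩
      · have := Fin.mk_lt_mk.mp hlt'
        omega
    obtain ⟨a, b, hab, heq⟩ := Fintype.exists_ne_map_eq_of_card_lt
      (fun k : Fin (m + 2) => c ⟨⟨2 * k.1, hb2 k⟩, evenVert m _ (hEk k)⟩) (by simp)
    rcases Nat.lt_or_ge a.1 b.1 with h | h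
    · exact main a b h heq
    · have h' : b.1 < a.1 := by
        have hne : a.1 ≠ b.1 := fun hh => hab (Fin.ext hh)
        omega
      exact main b a h' heq.symm
  refine le_csInf (chromNum_set_nonempty _) ?_
  rintro k ⟨c, hck⟩
  by_contra hk
  push_neg at hk
  have hk' : k ≤ m + 1 := by omega
  refine hmain (fun v => Fin.castLE hk' (c v)) ?_
  intro i a ha b hb d hd hab hbd
  simp only [Set.mem_setOf_eq] at ha hb hd
  have e1 : c b = c a := Fin.castLE_injective hk' (hb.trans ha.symm)
  have e2 : c d = c a := Fin.castLE_injective hk' (hd.trans ha.symm)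
  exact hck (c a) a rfl b e1 d e2 hab hbd

end Tournament

open Tournament in
/-- For every positive integer `n`, the chromatic number of the
tournament `A_n` equals `n`. -/
theorem chromNum_Atour (n : ℕ) (hn : 1 ≤ n) : (Atour n).chromNum = n := by
  induction n with
  | zero => omega
  | succ n IH =>
    rcases Nat.eq_zero_or_pos n with rfl | hn'
    · exact chromNum_oneTour
    · have IH' := IH hn'
      obtain ⟨m, rfl⟩ : ∃ m, n = m + 1 := ⟨n - 1, by omega⟩
      exact le_antisymm (Atour_ub m IH') (Atour_lb m IH')
end

section
/- Every heroic set of tournaments contains a tournament belonging to 𝒟 and contains a tournament belonging to 𝒜. -/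
namespace Tournament

/-- Auxiliary: `T` can be colored with `k` transitive color classes. -/
def Colorable' (T : Tournament) (k : ℕ) : Prop :=
  ∃ c : T.V → Fin k, ∀ i, T.IsTransSet {v | c v = i}

lemma colorable_chromNum (T : Tournament) : Colorable' T T.chromNum := by
  have hmem : Colorable' T (Fintype.card T.V) := by
    refine ⟨fun v => Fintype.equivFin T.V v, fun i a ha b hb d hd hab hbd => ?_⟩
    have hab' : a = b := (Fintype.equivFin T.V).injective (ha.trans hb.symm)
    exact (T.irrefl b (hab' ▸ hab)).elim
  exact Nat.sInf_mem (s := {k | Colorable' T k}) ⟨_, hmem⟩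

lemma deltaDir_of_lt {N x y : ℕ} (hx : x < N) (hy : y < N) (h : x < y)
    (h2 : ¬ (Even x ∧ Even y)) : deltaDir (⟨x, hx⟩ : Fin N) ⟨y, hy⟩ :=
  Or.inl ⟨h, h2⟩

lemma deltaDir_of_gt {N x y : ℕ} (hx : x < N) (hy : y < N) (h : y < x)
    (h2 : Even x ∧ Even y) : deltaDir (⟨x, hx⟩ : Fin N) ⟨y, hy⟩ :=
  Or.inr ⟨h, h2⟩

/-- If some color `i0` is avoided by part `p` of a Δ-sum colored with `k+1`
transitive classes, then the part itself is colorable with `k` classes. -/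
lemma part_colorable {m k : ℕ} (F : Fin m → Tournament)
    (c : (deltaSum F).V → Fin (k + 1))
    (hc : ∀ i, (deltaSum F).IsTransSet {v | c v = i}) (p : Fin m) (i0 : Fin (k + 1))
    (h : ∀ a : (F p).V, c ⟨p, a⟩ ≠ i0) : Colorable' (F p) k := by
  have hex : ∀ a : (F p).V, ∃ j : Fin k, i0.succAbove j = c ⟨p, a⟩ := fun a =>
    Fin.exists_succAbove_eq (h a)
  choose g hg using hex
  refine ⟨g, fun i a ha b hb d hd hab hbd => ?_⟩
  have hca : c ⟨p, a⟩ = i0.succAbove i := by rw [← hg a]; exact congrArg _ ha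
  have hcb : c ⟨p, b⟩ = i0.succAbove i := by rw [← hg b]; exact congrArg _ hb
  have hcd : c ⟨p, d⟩ = i0.succAbove i := by rw [← hg d]; exact congrArg _ hd
  have h1 : (deltaSum F).adj ⟨p, a⟩ ⟨p, b⟩ := Or.inr ⟨p, a, b, hab, rfl, rfl⟩
  have h2 : (deltaSum F).adj ⟨p, b⟩ ⟨p, d⟩ := Or.inr ⟨p, b, d, hbd, rfl, rfl⟩
  have h3 := hc (i0.succAbove i) ⟨p, a⟩ hca ⟨p, b⟩ hcb ⟨p, d⟩ hcd h1 h2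
  rcases h3 with h3 | ⟨q, u, v, huv, e1, e2⟩
  · exact (deltaDir_irrefl p h3).elim
  · obtain ⟨eq1, eq2⟩ := Sigma.mk.inj_iff.mp e1
    subst eq1
    obtain rfl := eq_of_heq eq2
    obtain ⟨eq3, eq4⟩ := Sigma.mk.inj_iff.mp e2
    obtain rfl := eq_of_heq eq4
    exact huv

/-- The part function of `Dtour (m+2)`. -/
def Dparts (m : ℕ) : Fin 3 → Tournament := ![oneTour, Dtour (m + 1), Dtour (m + 1)]

lemma Dparts_zero (m : ℕ) : Dparts m ⟨0, by omega⟩ = oneTour := rfl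
lemma Dparts_one (m : ℕ) : Dparts m ⟨1, by omega⟩ = Dtour (m + 1) := rfl
lemma Dparts_two (m : ℕ) : Dparts m ⟨2, by omega⟩ = Dtour (m + 1) := rfl

/-- The singleton vertex of part `0` of `Dtour (m+2)`. -/
def Dvert0 (m : ℕ) : (deltaSum (Dparts m)).V :=
  ⟨⟨0, by omega⟩, cast (congrArg Tournament.V (Dparts_zero m)).symm ⟨⟩⟩

lemma D_bound : ∀ n k, Colorable' (Dtour n) k → n ≤ k := by
  intro n
  induction n using Nat.strong_induction_on with
  | _ n IH =>
    match n, IH with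
    | 0, _ => intro k _; omega
    | 1, _ =>
      rintro k ⟨c, _⟩
      exact (c ⟨⟩).pos
    | m + 2, IH =>
      rintro k ⟨c0, hc0⟩
      have hc : ∀ i, (deltaSum (Dparts m)).IsTransSet {v | c0 v = i} := hc0
      let c : (deltaSum (Dparts m)).V → Fin k := c0
      let v0 : (deltaSum (Dparts m)).V := Dvert0 m
      obtain ⟨k', rfl⟩ : ∃ k', k = k' + 1 := ⟨k - 1, by have := (c v0).pos; omega⟩
      have key : (∀ a : (Dparts m ⟨1, by omega⟩).V, c ⟨⟨1, by omega⟩, a⟩ ≠ c v0) ∨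
          (∀ b : (Dparts m ⟨2, by omega⟩).V, c ⟨⟨2, by omega⟩, b⟩ ≠ c v0) := by
        by_contra hcon
        push_neg at hcon
        obtain ⟨⟨a, ha⟩, ⟨b, hb⟩⟩ := hcon
        have d01 : deltaDir (⟨0, by omega⟩ : Fin 3) ⟨1, by omega⟩ :=
          deltaDir_of_lt _ _ (by omega) (by rintro ⟨-, h1⟩; rw [Nat.even_iff] at h1; omega)
        have d12 : deltaDir (⟨1, by omega⟩ : Fin 3) ⟨2, by omega⟩ :=
          deltaDir_of_lt _ _ (by omega) (by rintro ⟨h1, -⟩; rw [Nat.even_iff] at h1; omega)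
        have d20 : deltaDir (⟨2, by omega⟩ : Fin 3) ⟨0, by omega⟩ :=
          deltaDir_of_gt _ _ (by omega) ⟨⟨1, rfl⟩, ⟨0, rfl⟩⟩
        have e1 : (deltaSum (Dparts m)).adj v0 ⟨⟨1, by omega⟩, a⟩ := Or.inl d01
        have e2 : (deltaSum (Dparts m)).adj ⟨⟨1, by omega⟩, a⟩ ⟨⟨2, by omega⟩, b⟩ :=
          Or.inl d12
        have e3 : (deltaSum (Dparts m)).adj ⟨⟨2, by omega⟩, b⟩ v0 := Or.inl d20
        have htr := hc (c v0) v0 rfl ⟨⟨1, by omega⟩, a⟩ ha ⟨⟨2, by omega⟩, b⟩ hb e1 e2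
        exact (deltaSum (Dparts m)).asymm _ _ htr e3
      rcases key with key | key
      · have h1 : Colorable' (Dparts m ⟨1, by omega⟩) k' :=
          part_colorable (Dparts m) c hc ⟨1, by omega⟩ (c v0) key
        have h2 : Colorable' (Dtour (m + 1)) k' := h1
        have := IH (m + 1) (by omega) k' h2
        omega
      · have h1 : Colorable' (Dparts m ⟨2, by omega⟩) k' :=
          part_colorable (Dparts m) c hc ⟨2, by omega⟩ (c v0) key
        have h2 : Colorable' (Dtour (m + 1)) k' := h1
        have := IH (m + 1) (by omega) k' h2
        omega

/-- The part function of `Atour (m+2)`. -/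
def Aparts (m : ℕ) : Fin (2 * (m + 2) - 1) → Tournament :=
  fun t => if Even t.1 then oneTour else Atour (m + 1)

lemma Aparts_even (m x : ℕ) (hx : x < 2 * (m + 2) - 1) (he : Even x) :
    Aparts m ⟨x, hx⟩ = oneTour := if_pos he

lemma Aparts_odd (m x : ℕ) (hx : x < 2 * (m + 2) - 1) (he : ¬ Even x) :
    Aparts m ⟨x, hx⟩ = Atour (m + 1) := if_neg he

/-- The singleton vertex of the `2i`-th part of `Atour (m+2)`. -/
def Avert (m : ℕ) (i : Fin (m + 2)) : (deltaSum (Aparts m)).V :=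
  ⟨⟨2 * i.1, by have := i.isLt; omega⟩,
    cast (congrArg Tournament.V
      (Aparts_even m (2 * i.1) (by have := i.isLt; omega) ⟨i.1, by ring⟩)).symm ⟨⟩⟩

lemma A_bound : ∀ n k, Colorable' (Atour n) k → n ≤ k := by
  intro n
  induction n using Nat.strong_induction_on with
  | _ n IH =>
    match n, IH with
    | 0, _ => intro k _; omega
    | 1, _ =>
      rintro k ⟨c, _⟩
      exact (c ⟨⟩).pos
    | m + 2, IH =>
      rintro k ⟨c0, hc0⟩
      by_contra hlt
      push_neg at hlt
      have hc : ∀ i, (deltaSum (Aparts m)).IsTransSet {v | c0 v = i} := hc0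
      let c : (deltaSum (Aparts m)).V → Fin k := c0
      obtain ⟨k', rfl⟩ : ∃ k', k = k' + 1 :=
        ⟨k - 1, by have := (c (Avert m ⟨0, by omega⟩)).pos; omega⟩
      have main : ∀ a b : Fin (m + 2), a < b →
          c (Avert m a) = c (Avert m b) → False := by
        intro a b hab heq
        have hab' : a.1 < b.1 := hab
        have hblt := b.isLt
        have hjlt : 2 * a.1 + 1 < 2 * (m + 2) - 1 := by omega
        have halt : 2 * a.1 < 2 * (m + 2) - 1 := by omega
        have hblt2 : 2 * b.1 < 2 * (m + 2) - 1 := by omega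
        have havoid : ∀ x : (Aparts m ⟨2 * a.1 + 1, hjlt⟩).V,
            c ⟨⟨2 * a.1 + 1, hjlt⟩, x⟩ ≠ c (Avert m a) := by
          intro x hx
          have d1 : deltaDir (⟨2 * a.1, halt⟩ : Fin (2 * (m + 2) - 1))
              ⟨2 * a.1 + 1, hjlt⟩ :=
            deltaDir_of_lt _ _ (by omega)
              (by rintro ⟨-, h1⟩; rw [Nat.even_iff] at h1; omega)
          have d2 : deltaDir (⟨2 * a.1 + 1, hjlt⟩ : Fin (2 * (m + 2) - 1))
              ⟨2 * b.1, hblt2⟩ :=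
            deltaDir_of_lt _ _ (by omega)
              (by rintro ⟨h1, -⟩; rw [Nat.even_iff] at h1; omega)
          have d3 : deltaDir (⟨2 * b.1, hblt2⟩ : Fin (2 * (m + 2) - 1))
              ⟨2 * a.1, halt⟩ :=
            deltaDir_of_gt _ _ (by omega) ⟨⟨b.1, by ring⟩, ⟨a.1, by ring⟩⟩
          have e1 : (deltaSum (Aparts m)).adj (Avert m a) ⟨⟨2 * a.1 + 1, hjlt⟩, x⟩ :=
            Or.inl d1
          have e2 : (deltaSum (Aparts m)).adj ⟨⟨2 * a.1 + 1, hjlt⟩, x⟩ (Avert m b) :=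
            Or.inl d2
          have e3 : (deltaSum (Aparts m)).adj (Avert m b) (Avert m a) := Or.inl d3
          have htr := hc (c (Avert m a)) (Avert m a) rfl ⟨⟨2 * a.1 + 1, hjlt⟩, x⟩ hx
            (Avert m b) heq.symm e1 e2
          exact (deltaSum (Aparts m)).asymm _ _ htr e3
        have h1 : Colorable' (Aparts m ⟨2 * a.1 + 1, hjlt⟩) k' :=
          part_colorable (Aparts m) c hc ⟨2 * a.1 + 1, hjlt⟩ (c (Avert m a)) havoid
        rw [Aparts_odd m (2 * a.1 + 1) hjlt
          (by rw [Nat.even_iff]; omega)] at h1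
        have := IH (m + 1) (by omega) k' h1
        omega
      have hcard : Fintype.card (Fin (k' + 1)) < Fintype.card (Fin (m + 2)) := by
        simp only [Fintype.card_fin]; omega
      obtain ⟨a, b, hne, heq⟩ :=
        Fintype.exists_ne_map_eq_of_card_lt (fun i : Fin (m + 2) => c (Avert m i)) hcard
      rcases hne.lt_or_gt with hlt' | hlt'
      · exact main a b hlt' heq
      · exact main b a hlt' heq.symm

end Tournament

open Tournament in
/-- Every heroic set contains a tournament of `𝒟` and a
tournament of `𝒜`. -/
theorem heroic_meets_classD_classA (𝓗 : Set Tournament) (h : Heroic 𝓗) :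
    (𝓗 ∩ classD).Nonempty ∧ (𝓗 ∩ classA).Nonempty := by
  obtain ⟨c, hcb⟩ := h
  constructor
  · by_contra hne
    rw [Set.not_nonempty_iff_eq_empty] at hne
    have hfree : ∀ X ∈ 𝓗, ¬ (Dtour (c + 1)).Contains X := by
      intro X hX hcont
      have hmem : X ∈ 𝓗 ∩ classD := ⟨hX, ⟨c + 1, by omega, hcont⟩⟩
      rw [hne] at hmem
      exact hmem
    have h1 := hcb (Dtour (c + 1)) hfree
    have h2 := D_bound (c + 1) _ (colorable_chromNum _)
    omega
  · by_contra hne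
    rw [Set.not_nonempty_iff_eq_empty] at hne
    have hfree : ∀ X ∈ 𝓗, ¬ (Atour (c + 1)).Contains X := by
      intro X hX hcont
      have hmem : X ∈ 𝓗 ∩ classA := ⟨hX, ⟨c + 1, by omega, hcont⟩⟩
      rw [hne] at hmem
      exact hmem
    have h1 := hcb (Atour (c + 1)) hfree
    have h2 := A_bound (c + 1) _ (colorable_chromNum _)
    omega
end

section
/- Let T be a strongly connected tournament belonging to 𝒜. If S is a maximal homogeneous set of T and ({v_1}, X_1, {v_2}, X_2, …, X_{n−1}, {v_n}) is a Δ-partition of T whose odd-indexed parts are single vertices, then S = X_k for some 1 ≤ k ≤ n−1. -/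
open Tournament in
/-- In a strongly connected tournament of `𝒜`, every maximal
homogeneous set equals one of the (1-based) even-indexed parts of any
Δ-partition whose odd-indexed parts are singletons. -/
theorem maximal_homog_eq_part (T : Tournament) (hT : T ∈ classA)
    (hsc : T.StronglyConnected) (S : Set T.V) (hS : T.Homog S)
    (hmax : ∀ S' : Set T.V, T.Homog S' → S ⊆ S' → S = S')
    (n : ℕ) (hn : 2 ≤ n) (P : Fin (2 * n - 1) → Set T.V)
    (hP : T.IsDeltaPartition P)
    (hsing : ∀ i : Fin (2 * n - 1), Even i.1 → ∃ v, P i = {v}) :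
    ∃ i : Fin (2 * n - 1), Odd i.1 ∧ S = P i := by
  classical
  obtain ⟨hnonempty, huniq, hcross⟩ := hP
  choose part hpart hpartu using huniq
  have hpmem : ∀ {v : T.V} {k : Fin (2 * n - 1)}, v ∈ P k → part v = k :=
    fun {v k} h => (hpartu v k h).symm
  have hadj : ∀ u v : T.V, part u ≠ part v →
      (T.adj u v ↔ deltaDir (part u) (part v)) :=
    fun u v h => hcross _ _ h u (hpart u) v (hpart v)
  obtain ⟨hS1, hS2, hS3⟩ := hS
  by_cases hsub : ∃ i, S ⊆ P i
  · obtain ⟨i, hiS⟩ := hsub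
    have hodd : Odd i.1 := by
      by_contra h
      have he : Even i.1 := Nat.not_odd_iff_even.mp h
      obtain ⟨v, hv⟩ := hsing i he
      have h1 : S.ncard ≤ 1 := by
        have := Set.ncard_le_ncard (hv ▸ hiS) (Set.finite_singleton v)
        simpa using this
      omega
    refine ⟨i, hodd, ?_⟩
    apply hmax (P i) ?_ hiS
    refine ⟨lt_of_lt_of_le hS1 (Set.ncard_le_ncard hiS (Set.toFinite _)), ?_, ?_⟩
    · -- P i is not everything
      have h3 : (3:ℕ) ≤ 2 * n - 1 := by omega
      have hne01 : (⟨0, by omega⟩ : Fin (2*n-1)) ≠ ⟨1, by omega⟩ := by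
        intro h; exact absurd (congrArg Fin.val h) (by simp)
      obtain ⟨j, hji⟩ : ∃ j : Fin (2*n-1), j ≠ i := by
        by_cases h0 : i = ⟨0, by omega⟩
        · exact ⟨⟨1, by omega⟩, by rw [h0]; exact hne01.symm⟩
        · exact ⟨⟨0, by omega⟩, fun h => h0 h.symm⟩
      obtain ⟨x, hx⟩ := hnonempty j
      have hxP : x ∉ P i := fun hxi => hji (by rw [← hpmem hx, hpmem hxi])
      have hss : P i ⊂ Set.univ :=
        ⟨Set.subset_univ _, fun h => hxP (h (Set.mem_univ x))⟩
      calc (P i).ncard < (Set.univ : Set T.V).ncard :=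
              Set.ncard_lt_ncard hss (Set.toFinite _)
        _ = Nat.card T.V := Set.ncard_univ _
    · rintro v hv ⟨⟨s1, hs1, hvs1⟩, ⟨s2, hs2, hs2v⟩⟩
      have hpv : part v ≠ i := fun h => hv (h ▸ hpart v)
      have d1 : deltaDir (part v) i :=
        (hcross (part v) i hpv v (hpart v) s1 hs1).mp hvs1
      have d2 : deltaDir i (part v) :=
        (hcross i (part v) (Ne.symm hpv) s2 hs2 v (hpart v)).mp hs2v
      exact deltaDir_asymm d1 d2
  · exfalso
    push_neg at hsub
    have hSne : S.Nonempty := Set.nonempty_of_ncard_ne_zero (by omega)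
    set F : Finset (Fin (2*n-1)) := (Set.toFinite S).toFinset.image part with hF
    have hmemF : ∀ k : Fin (2*n-1), k ∈ F ↔ ∃ v ∈ S, part v = k := by
      intro k
      simp only [hF, Finset.mem_image, Set.Finite.mem_toFinset]
    have hFne : F.Nonempty := by
      obtain ⟨u, hu⟩ := hSne
      exact ⟨part u, (hmemF _).mpr ⟨u, hu, rfl⟩⟩
    set i := F.min' hFne with hi
    set j := F.max' hFne with hj
    obtain ⟨u, huS, hpu⟩ := (hmemF i).mp (F.min'_mem hFne)
    obtain ⟨w, hwS, hpw⟩ := (hmemF j).mp (F.max'_mem hFne)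
    have hle : ∀ {v : T.V}, v ∈ S → i ≤ part v ∧ part v ≤ j :=
      fun {v} hv => ⟨F.min'_le _ ((hmemF _).mpr ⟨v, hv, rfl⟩),
                     F.le_max' _ ((hmemF _).mpr ⟨v, hv, rfl⟩)⟩
    have hij : i < j := by
      obtain ⟨x, hxS, hxPi⟩ := Set.not_subset.mp (hsub i)
      have hpx : part x ≠ i := fun h => hxPi (h ▸ hpart x)
      exact lt_of_lt_of_le (lt_of_le_of_ne (hle hxS).1 (Ne.symm hpx)) (hle hxS).2
    -- every odd part strictly between i and j is inside S
    have keyOdd : ∀ k : Fin (2*n-1), i < k → k < j → ¬ Even k.1 → P k ⊆ S := by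
      intro k hik hkj hkodd x hx
      by_contra hxS
      have hpx : part x = k := hpmem hx
      apply hS3 x hxS
      constructor
      · refine ⟨w, hwS, ?_⟩
        have hne' : part x ≠ part w := by
          rw [hpx, hpw]; exact ne_of_lt hkj
        rw [hadj x w hne', hpx, hpw]
        exact Or.inl ⟨hkj, fun hc => hkodd hc.1⟩
      · refine ⟨u, huS, ?_⟩
        have hne' : part u ≠ part x := by
          rw [hpx, hpu]; exact ne_of_lt hik
        rw [hadj u x hne', hpx, hpu]
        exact Or.inl ⟨hik, fun hc => hkodd hc.2⟩
    -- every part strictly between i and j is inside S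
    have key : ∀ k : Fin (2*n-1), i < k → k < j → P k ⊆ S := by
      intro k hik hkj
      by_cases hkodd : Even k.1
      · intro x hx
        by_contra hxS
        have hpx : part x = k := hpmem hx
        apply hS3 x hxS
        constructor
        · -- out-neighbor: part k+1 (odd)
          by_cases h1 : k.1 + 1 = j.1
          · refine ⟨w, hwS, ?_⟩
            have hjodd : ¬ Even j.1 := by
              rw [Nat.even_iff] at hkodd ⊢; omega
            have hne' : part x ≠ part w := by
              rw [hpx, hpw]; exact ne_of_lt hkj
            rw [hadj x w hne', hpx, hpw]
            exact Or.inl ⟨hkj, fun hc => hjodd hc.2⟩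
          · have hb : k.1 + 1 < 2 * n - 1 := by
              have := j.isLt; have := hkj; omega
            set b : Fin (2*n-1) := ⟨k.1 + 1, hb⟩ with hbdef
            have hbodd : ¬ Even b.1 := by
              show ¬ Even (k.1+1); rw [Nat.even_iff] at hkodd ⊢; omega
            have hib : i < b := lt_trans hik (by simp [hbdef, Fin.lt_def])
            have hbj : b < j := by
              simp only [Fin.lt_def, hbdef]
              have : k.1 < j.1 := hkj
              omega
            obtain ⟨y, hy⟩ := hnonempty b
            have hyS : y ∈ S := keyOdd b hib hbj hbodd hy
            refine ⟨y, hyS, ?_⟩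
            have hpy : part y = b := hpmem hy
            have hne' : part x ≠ part y := by
              rw [hpx, hpy]
              intro h
              exact absurd (congrArg Fin.val h) (by simp [hbdef])
            rw [hadj x y hne', hpx, hpy]
            refine Or.inl ⟨by simp [hbdef, Fin.lt_def], fun hc => hbodd hc.2⟩
        · -- in-neighbor: part k-1 (odd)
          have hk1 : 1 ≤ k.1 := by
            have : i.1 < k.1 := hik; omega
          by_cases h1 : i.1 + 1 = k.1
          · refine ⟨u, huS, ?_⟩
            have hiodd : ¬ Even i.1 := by
              rw [Nat.even_iff] at hkodd ⊢; omega
            have hne' : part u ≠ part x := by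
              rw [hpx, hpu]; exact ne_of_lt hik
            rw [hadj u x hne', hpx, hpu]
            exact Or.inl ⟨hik, fun hc => hiodd hc.1⟩
          · set a : Fin (2*n-1) := ⟨k.1 - 1, by have := k.isLt; omega⟩ with hadef
            have haodd : ¬ Even a.1 := by
              show ¬ Even (k.1-1); rw [Nat.even_iff] at hkodd ⊢; omega
            have hia : i < a := by
              simp only [Fin.lt_def, hadef]
              have : i.1 < k.1 := hik
              omega
            have haj : a < j := by
              simp only [Fin.lt_def, hadef]
              have : k.1 < j.1 := hkj
              omega
            obtain ⟨y, hy⟩ := hnonempty a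
            have hyS : y ∈ S := keyOdd a hia haj haodd hy
            refine ⟨y, hyS, ?_⟩
            have hpy : part y = a := hpmem hy
            have hne' : part y ≠ part x := by
              rw [hpx, hpy]
              intro h
              have := congrArg Fin.val h
              simp only [hadef] at this
              omega
            rw [hadj y x hne', hpx, hpy]
            refine Or.inl ⟨by simp [hadef, Fin.lt_def]; omega, fun hc => haodd hc.1⟩
      · exact keyOdd k hik hkj hkodd
    -- S contains a vertex with odd part and a vertex with even part
    have hOddEven : (∃ y ∈ S, ¬ Even (part y).1) ∧ (∃ z ∈ S, Even (part z).1) := by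
      by_cases hpi : Even i.1
      · refine ⟨?_, ⟨u, huS, by rw [hpu]; exact hpi⟩⟩
        by_cases h1 : i.1 + 1 = j.1
        · exact ⟨w, hwS, by rw [hpw]; rw [Nat.even_iff] at hpi ⊢; omega⟩
        · set b : Fin (2*n-1) := ⟨i.1 + 1, by have := j.isLt; have : i.1 < j.1 := hij; omega⟩ with hbdef
          have hib : i < b := by simp [hbdef, Fin.lt_def]
          have hbj : b < j := by
            simp only [Fin.lt_def, hbdef]
            have : i.1 < j.1 := hij
            omega
          obtain ⟨y, hy⟩ := hnonempty b
          refine ⟨y, key b hib hbj hy, ?_⟩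
          rw [hpmem hy]
          show ¬ Even (i.1+1)
          rw [Nat.even_iff] at hpi ⊢; omega
      · refine ⟨⟨u, huS, by rw [hpu]; exact hpi⟩, ?_⟩
        by_cases h1 : i.1 + 1 = j.1
        · exact ⟨w, hwS, by rw [hpw]; rw [Nat.even_iff] at hpi ⊢; omega⟩
        · set b : Fin (2*n-1) := ⟨i.1 + 1, by have := j.isLt; have : i.1 < j.1 := hij; omega⟩ with hbdef
          have hib : i < b := by simp [hbdef, Fin.lt_def]
          have hbj : b < j := by
            simp only [Fin.lt_def, hbdef]
            have : i.1 < j.1 := hij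
            omega
          obtain ⟨y, hy⟩ := hnonempty b
          refine ⟨y, key b hib hbj hy, ?_⟩
          rw [hpmem hy]
          show Even (i.1+1)
          rw [Nat.even_iff] at hpi ⊢; omega
    obtain ⟨⟨y, hyS, hyOdd⟩, ⟨z, hzS, hzEven⟩⟩ := hOddEven
    -- i = 0
    have hi0 : i.1 = 0 := by
      by_contra h0
      have hz : (0:ℕ) < 2 * n - 1 := by omega
      obtain ⟨v0, hv0⟩ := hsing ⟨0, hz⟩ (by simp)
      have hv0m : v0 ∈ P ⟨0, hz⟩ := by rw [hv0]; rfl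
      have hpv0 : part v0 = ⟨0, hz⟩ := hpmem hv0m
      have hv0S : v0 ∉ S := by
        intro hmem
        have := (hle hmem).1
        rw [hpv0] at this
        exact h0 (Nat.le_antisymm this (Nat.zero_le _))
      apply hS3 v0 hv0S
      constructor
      · refine ⟨y, hyS, ?_⟩
        have hylt : 0 < (part y).1 := by
          have : i ≤ part y := (hle hyS).1
          have : i.1 ≤ (part y).1 := this
          omega
        have hne' : part v0 ≠ part y := by
          rw [hpv0]; intro h; rw [← h] at hylt; simp at hylt
        rw [hadj v0 y hne', hpv0]
        exact Or.inl ⟨hylt, fun hc => hyOdd hc.2⟩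
      · refine ⟨z, hzS, ?_⟩
        have hzlt : 0 < (part z).1 := by
          have : i ≤ part z := (hle hzS).1
          have : i.1 ≤ (part z).1 := this
          omega
        have hne' : part z ≠ part v0 := by
          rw [hpv0]; intro h
          have := congrArg Fin.val h
          simp at this
          omega
        rw [hadj z v0 hne', hpv0]
        exact Or.inr ⟨hzlt, hzEven, by simp⟩
    -- j = 2n-2
    have hjmax : j.1 = 2 * n - 2 := by
      by_contra h0
      have hz : 2 * n - 2 < 2 * n - 1 := by omega
      have hEvLast : Even (2 * n - 2) := by rw [Nat.even_iff]; omega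
      obtain ⟨vL, hvL⟩ := hsing ⟨2*n-2, hz⟩ hEvLast
      have hvLm : vL ∈ P ⟨2*n-2, hz⟩ := by rw [hvL]; rfl
      have hpvL : part vL = ⟨2*n-2, hz⟩ := hpmem hvLm
      have hjlt : j.1 < 2 * n - 2 := by
        have := j.isLt; omega
      have hvLS : vL ∉ S := by
        intro hmem
        have := (hle hmem).2
        rw [hpvL] at this
        have : (2*n-2 : ℕ) ≤ j.1 := this
        omega
      apply hS3 vL hvLS
      constructor
      · refine ⟨z, hzS, ?_⟩
        have hzlt : (part z).1 < 2*n-2 := by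
          have : part z ≤ j := (hle hzS).2
          have : (part z).1 ≤ j.1 := this
          omega
        have hne' : part vL ≠ part z := by
          rw [hpvL]; intro h
          have := congrArg Fin.val h
          simp at this
          omega
        rw [hadj vL z hne', hpvL]
        exact Or.inr ⟨hzlt, hEvLast, hzEven⟩
      · refine ⟨y, hyS, ?_⟩
        have hylt : (part y).1 < 2*n-2 := by
          have : part y ≤ j := (hle hyS).2
          have : (part y).1 ≤ j.1 := this
          omega
        have hne' : part y ≠ part vL := by
          rw [hpvL]; intro h
          have := congrArg Fin.val h
          simp at this
          omega
        rw [hadj y vL hne', hpvL]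
        exact Or.inl ⟨hylt, fun hc => hyOdd hc.1⟩
    -- S = univ, contradiction
    have hSuniv : S = Set.univ := by
      apply Set.eq_univ_of_forall
      intro x
      by_cases h0 : (part x).1 = 0
      · have hxi : part x = i := Fin.ext (by omega)
        have hiev : Even i.1 := by rw [Nat.even_iff]; omega
        obtain ⟨v, hv⟩ := hsing i hiev
        have hxv : x = v := by
          have : x ∈ P i := hxi ▸ hpart x
          rw [hv] at this; exact this
        have huv : u = v := by
          have : u ∈ P i := hpu ▸ hpart u
          rw [hv] at this; exact this
        rw [hxv, ← huv]; exact huS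
      by_cases hL : (part x).1 = 2*n-2
      · have hxj : part x = j := Fin.ext (by omega)
        have hjev : Even j.1 := by rw [Nat.even_iff]; omega
        obtain ⟨v, hv⟩ := hsing j hjev
        have hxv : x = v := by
          have : x ∈ P j := hxj ▸ hpart x
          rw [hv] at this; exact this
        have hwv : w = v := by
          have : w ∈ P j := hpw ▸ hpart w
          rw [hv] at this; exact this
        rw [hxv, ← hwv]; exact hwS
      · have h1 : i < part x := by
          show i.1 < (part x).1
          have := (part x).isLt
          omega
        have h2 : part x < j := by
          show (part x).1 < j.1
          have := (part x).isLt
          omega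
        exact key (part x) h1 h2 (hpart x)
    rw [hSuniv, Set.ncard_univ] at hS2
    exact lt_irrefl _ hS2
end

section
/- Let T be a forest tournament with at least two vertices and let σ be a forest ordering of V(T). Then for every vertex v of T, the tournament T∖v obtained by deleting v is a forest tournament, and the ordering σ with v removed is a forest ordering of T∖v. -/
namespace Tournament

open scoped List

theorem backAdj_mono (T : Tournament) {l l' : List T.V} (hs : l' <+ l) {u v : T.V}
    (h : T.BackAdj l' u v) : T.BackAdj l u v := by
  rcases h with ⟨h, s⟩ | ⟨h, s⟩
  · exact Or.inl ⟨h, s.trans hs⟩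
  · exact Or.inr ⟨h, s.trans hs⟩

theorem isForestOrdering_sublist (T : Tournament) {l : List T.V}
    (h : IsForestOrdering T l) : ∀ l', l' <+ l → l' ≠ [] → IsForestOrdering T l' := by
  induction h with
  | single v =>
      intro l' hs hne
      rcases List.sublist_singleton.mp hs with rfl | rfl
      · exact absurd rfl hne
      · exact IsForestOrdering.single v
  | split l₁ l₂ h₁ h₂ hsep f₁ f₂ ih₁ ih₂ =>
      intro l' hs hne
      rw [List.sublist_append_iff] at hs
      obtain ⟨a, b, rfl, ha, hb⟩ := hs
      by_cases hA : a = []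
      · subst hA; simpa using ih₂ b hb (by simpa using hne)
      by_cases hB : b = []
      · subst hB; simpa using ih₁ a ha (by simpa using hne)
      refine IsForestOrdering.split a b hA hB ?_ (ih₁ a ha hA) (ih₂ b hb hB)
      intro x hx y hy c hc d hd hxy hcd hpath
      have hsub : a ++ b <+ l₁ ++ l₂ := ha.append hb
      exact hsep x (ha.subset hx) y (hb.subset hy) c (ha.subset hc) d (hb.subset hd)
        (T.backAdj_mono hsub hxy) (T.backAdj_mono hsub hcd)
        (Relation.ReflTransGen.mono (fun p q => T.backAdj_mono hsub) _ _ hpath)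

theorem backAdj_map_iff {S T : Tournament} (f : S.V → T.V)
    (hinj : Function.Injective f) (hadj : ∀ u v, S.adj u v ↔ T.adj (f u) (f v))
    (L : List S.V) (u v : S.V) :
    S.BackAdj L u v ↔ T.BackAdj (L.map f) (f u) (f v) := by
  have key : ∀ x y : S.V, [x, y] <+ L ↔ [f x, f y] <+ L.map f := by
    intro x y
    constructor
    · intro h; simpa using h.map f
    · intro h
      rw [List.sublist_map_iff] at h
      obtain ⟨l', hl', heq⟩ := h
      match l', heq with
      | [], heq => simp at heq
      | [a], heq => simp at heq
      | a :: b :: c :: t, heq => simp at heq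
      | [x', y'], heq =>
        simp only [List.map_cons, List.map_nil, List.cons.injEq, and_true] at heq
        obtain ⟨h1, h2⟩ := heq
        rwa [hinj h1.symm, hinj h2.symm] at hl'
  constructor
  · rintro (⟨h, s⟩ | ⟨h, s⟩)
    · exact Or.inl ⟨(hadj _ _).mp h, (key _ _).mp s⟩
    · exact Or.inr ⟨(hadj _ _).mp h, (key _ _).mp s⟩
  · rintro (⟨h, s⟩ | ⟨h, s⟩)
    · exact Or.inl ⟨(hadj _ _).mpr h, (key _ _).mpr s⟩
    · exact Or.inr ⟨(hadj _ _).mpr h, (key _ _).mpr s⟩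

theorem isForestOrdering_of_map {S T : Tournament} (f : S.V → T.V)
    (hinj : Function.Injective f) (hadj : ∀ u v, S.adj u v ↔ T.adj (f u) (f v))
    {L : List S.V} (h : IsForestOrdering T (L.map f)) : IsForestOrdering S L := by
  generalize hm : L.map f = m at h
  induction h generalizing L with
  | single v =>
      match L, hm with
      | [x], _ => exact IsForestOrdering.single x
      | [], hm => simp at hm
      | x :: y :: t, hm => simp at hm
  | split l₁ l₂ h₁ h₂ hsep f₁ f₂ ih₁ ih₂ =>
      rw [List.map_eq_append_iff] at hm
      obtain ⟨L₁, L₂, rfl, hm1, hm2⟩ := hm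
      have hL₁ : L₁ ≠ [] := by rintro rfl; exact h₁ hm1.symm
      have hL₂ : L₂ ≠ [] := by rintro rfl; exact h₂ hm2.symm
      refine IsForestOrdering.split L₁ L₂ hL₁ hL₂ ?_ (ih₁ hm1) (ih₂ hm2)
      intro a ha b hb c hc d hd hab hcd hpath
      have hmap : (L₁ ++ L₂).map f = l₁ ++ l₂ := by rw [List.map_append, hm1, hm2]
      have tr : ∀ x y : S.V, S.BackAdj (L₁ ++ L₂) x y → T.BackAdj (l₁ ++ l₂) (f x) (f y) := by
        intro x y hxy
        rw [← hmap]
        exact (backAdj_map_iff f hinj hadj _ x y).mp hxy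
      have := hsep (f a) (hm1 ▸ List.mem_map_of_mem (f := f) ha) (f b) (hm2 ▸ List.mem_map_of_mem (f := f) hb)
        (f c) (hm1 ▸ List.mem_map_of_mem (f := f) hc) (f d) (hm2 ▸ List.mem_map_of_mem (f := f) hd)
        (tr a b hab) (tr c d hcd) ?_
      · exact ⟨hinj this.1, hinj this.2⟩
      · exact Relation.ReflTransGen.lift f (fun p q => tr p q) _ _ hpath

end Tournament

open scoped List in
open Tournament in
/-- Deleting a vertex from a forest tournament (with at least two
vertices) yields a forest tournament, and the forest ordering with the vertex
removed is a forest ordering of the deletion. -/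
theorem forestOrdering_delete_vertex (T : Tournament) (l : List T.V)
    (hnd : l.Nodup) (hcov : ∀ v, v ∈ l) (hlen : 2 ≤ l.length)
    (hfo : IsForestOrdering T l) (v : T.V) :
    (T.induce {u | u ≠ v}).IsForestTournament ∧
      ∀ l₁ l₂ : List T.V, l = l₁ ++ v :: l₂ → IsForestOrdering T (l₁ ++ l₂) := by
  
  have part2 : ∀ l₁ l₂ : List T.V, l = l₁ ++ v :: l₂ → IsForestOrdering T (l₁ ++ l₂) := by
    intro l₁ l₂ heq
    have hs : l₁ ++ l₂ <+ l := by
      rw [heq]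
      exact ((l₂.sublist_cons_self v).append_left l₁)
    have hne : l₁ ++ l₂ ≠ [] := by
      intro h
      rcases List.append_eq_nil_iff.mp h with ⟨rfl, rfl⟩
      rw [heq] at hlen
      simp at hlen
    exact T.isForestOrdering_sublist hfo _ hs hne
  refine ⟨?_, part2⟩
  obtain ⟨l₁, l₂, heq⟩ := List.append_of_mem (hcov v)
  have hnd' : (v :: (l₁ ++ l₂)).Nodup := by
    rw [← List.nodup_middle, ← heq]; exact hnd
  have hvnot : v ∉ l₁ ++ l₂ := (List.nodup_cons.mp hnd').1
  have hfo' : IsForestOrdering T (l₁ ++ l₂) := part2 l₁ l₂ heq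
  set L : List (↥{u : T.V | u ≠ v}) :=
    (l₁ ++ l₂).attachWith (fun u => u ∈ ({u | u ≠ v} : Set T.V))
      (fun x hx => fun hxv => hvnot (hxv ▸ hx)) with hL
  have hmapL : L.map Subtype.val = l₁ ++ l₂ := List.attachWith_map_subtype_val _
  refine ⟨L, ?_, ?_, ?_⟩
  · exact List.Nodup.of_map Subtype.val (by rw [hmapL]; exact (List.nodup_cons.mp hnd').2)
  · intro w
    have hw1 : w.1 ∈ l₁ ++ l₂ := by
      have := hcov w.1
      rw [heq, List.mem_append, List.mem_cons] at this
      rcases this with h | h | h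
      · exact List.mem_append.mpr (Or.inl h)
      · exact absurd h w.2
      · exact List.mem_append.mpr (Or.inr h)
    have : w.1 ∈ L.map Subtype.val := by rw [hmapL]; exact hw1
    obtain ⟨y, hy, hyw⟩ := List.mem_map.mp this
    exact (Subtype.ext hyw : y = w) ▸ hy
  · exact isForestOrdering_of_map Subtype.val Subtype.val_injective (fun u v => Iff.rfl)
      (by have h := hfo'; rw [← hmapL] at h; exact h)
end

section
/- Every forest tournament has chromatic number at most two, i.e., its vertex set can be partitioned into two transitive sets. -/
section ForestAux

variable {α : Type*}

lemma pairSublistLeft {u v : α} {l₁ l₂ : List α} (hv : v ∉ l₂)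
    (h : [u, v].Sublist (l₁ ++ l₂)) : [u, v].Sublist l₁ := by
  induction l₁ with
  | nil => exact absurd (h.mem (by simp)) hv
  | cons a l₁ ih =>
    rcases List.sublist_cons_iff.mp h with h' | ⟨r, hr, hrl⟩
    · exact (ih h').trans (List.sublist_cons_self a l₁)
    · obtain ⟨rfl, rfl⟩ : a = u ∧ r = [v] := by
        injection hr with h1 h2; exact ⟨h1.symm, h2.symm⟩
      have hvl : v ∈ l₁ ++ l₂ := hrl.mem (by simp)
      have hvl₁ : v ∈ l₁ := (List.mem_append.mp hvl).resolve_right hv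
      exact List.cons_sublist_cons.mpr (List.singleton_sublist.mpr hvl₁)

lemma pairSublistRight {u v : α} {l₁ l₂ : List α} (hu : u ∉ l₁)
    (h : [u, v].Sublist (l₁ ++ l₂)) : [u, v].Sublist l₂ := by
  induction l₁ with
  | nil => simpa using h
  | cons a l₁ ih =>
    rcases List.sublist_cons_iff.mp h with h' | ⟨r, hr, hrl⟩
    · exact ih (fun hm => hu (List.mem_cons_of_mem a hm)) h'
    · obtain ⟨rfl, -⟩ : a = u ∧ r = [v] := by
        injection hr with h1 h2; exact ⟨h1.symm, h2.symm⟩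
      exact absurd (List.mem_cons_self : a ∈ a :: l₁) hu

lemma pairSublistTotal {x y : α} {l : List α} (hx : x ∈ l) (hy : y ∈ l)
    (hne : x ≠ y) : [x, y].Sublist l ∨ [y, x].Sublist l := by
  induction l with
  | nil => simp at hx
  | cons a l ih =>
    by_cases hxa : x = a
    · subst hxa
      have hy' : y ∈ l := (List.mem_cons.mp hy).resolve_left (fun e => hne e.symm)
      exact Or.inl (List.cons_sublist_cons.mpr (List.singleton_sublist.mpr hy'))
    · by_cases hya : y = a
      · subst hya
        have hx' : x ∈ l := (List.mem_cons.mp hx).resolve_left hxa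
        exact Or.inr (List.cons_sublist_cons.mpr (List.singleton_sublist.mpr hx'))
      · have hx' : x ∈ l := (List.mem_cons.mp hx).resolve_left hxa
        have hy' : y ∈ l := (List.mem_cons.mp hy).resolve_left hya
        rcases ih hx' hy' with h | h
        · exact Or.inl (h.trans (List.sublist_cons_self a l))
        · exact Or.inr (h.trans (List.sublist_cons_self a l))

lemma indexOfLtOfPairSublist [DecidableEq α] {x y : α} {l : List α}
    (hnd : l.Nodup) (h : [x, y].Sublist l) : l.idxOf x < l.idxOf y := by
  induction l with
  | nil => exact absurd (h.mem (by simp)) (List.not_mem_nil (a := x))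
  | cons a l ih =>
    obtain ⟨hal, hndl⟩ := List.nodup_cons.mp hnd
    rcases List.sublist_cons_iff.mp h with h' | ⟨r, hr, hrl⟩
    · have hx : x ∈ l := h'.mem (by simp)
      have hy : y ∈ l := h'.mem (by simp)
      have hxa : a ≠ x := fun e => hal (e ▸ hx)
      have hya : a ≠ y := fun e => hal (e ▸ hy)
      rw [List.idxOf_cons_ne l hxa, List.idxOf_cons_ne l hya]
      exact Nat.succ_lt_succ (ih hndl h')
    · obtain ⟨rfl, rfl⟩ : a = x ∧ r = [y] := by
        injection hr with h1 h2; exact ⟨h1.symm, h2.symm⟩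
      have hy : y ∈ l := hrl.mem (by simp)
      have hya : a ≠ y := fun e => hal (e ▸ hy)
      rw [List.idxOf_cons_self, List.idxOf_cons_ne l hya]
      exact Nat.succ_pos _

end ForestAux

namespace Tournament

lemma backAdj_symm (T : Tournament) {l : List T.V} {u v : T.V}
    (h : T.BackAdj l u v) : T.BackAdj l v u :=
  h.elim (fun h => Or.inr h) (fun h => Or.inl h)

lemma backAdj_mem_left (T : Tournament) {l : List T.V} {u v : T.V}
    (h : T.BackAdj l u v) : u ∈ l := by
  rcases h with ⟨-, hs⟩ | ⟨-, hs⟩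
  · exact hs.mem (by simp)
  · exact hs.mem (by simp)

lemma backAdj_restrict_left (T : Tournament) {l₁ l₂ : List T.V} {u v : T.V}
    (hu : u ∉ l₂) (hv : v ∉ l₂) (h : T.BackAdj (l₁ ++ l₂) u v) :
    T.BackAdj l₁ u v := by
  rcases h with ⟨ha, hs⟩ | ⟨ha, hs⟩
  · exact Or.inl ⟨ha, pairSublistLeft hu hs⟩
  · exact Or.inr ⟨ha, pairSublistLeft hv hs⟩

lemma backAdj_restrict_right (T : Tournament) {l₁ l₂ : List T.V} {u v : T.V}
    (hu : u ∉ l₁) (hv : v ∉ l₁) (h : T.BackAdj (l₁ ++ l₂) u v) :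
    T.BackAdj l₂ u v := by
  rcases h with ⟨ha, hs⟩ | ⟨ha, hs⟩
  · exact Or.inl ⟨ha, pairSublistRight hv hs⟩
  · exact Or.inr ⟨ha, pairSublistRight hu hs⟩

lemma forest_coloring (T : Tournament) (l : List T.V)
    (hfo : T.IsForestOrdering l) :
    l.Nodup → ∃ c : T.V → Bool, ∀ u ∈ l, ∀ v ∈ l, T.BackAdj l u v → c u ≠ c v := by
  classical
  induction hfo with
  | single v =>
    intro _
    refine ⟨fun _ => true, ?_⟩
    rintro u hu v' hv' hadj
    rcases hadj with ⟨ha, -⟩ | ⟨ha, -⟩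
    · simp only [List.mem_singleton] at hu hv'
      subst hu; subst hv'; exact absurd ha (T.irrefl _)
    · simp only [List.mem_singleton] at hu hv'
      subst hu; subst hv'; exact absurd ha (T.irrefl _)
  | split l₁ l₂ h₁ h₂ hsep f₁ f₂ ih₁ ih₂ =>
    intro hnd
    obtain ⟨hnd₁, hnd₂, hdisj'⟩ := List.nodup_append.mp hnd
    have hdisj : ∀ {x : T.V}, x ∈ l₁ → x ∈ l₂ → False := fun h1 h2 => hdisj' _ h1 _ h2 rfl
    obtain ⟨c₁, hc₁⟩ := ih₁ hnd₁
    obtain ⟨c₂, hc₂⟩ := ih₂ hnd₂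
    have hsymm : Symmetric (T.BackAdj (l₁ ++ l₂)) := fun u v h => T.backAdj_symm h
    have hRsymm := @Relation.ReflTransGen.symmetric _ (T.BackAdj (l₁ ++ l₂)) ⟨fun u v h => hsymm h⟩
    set L := l₁ ++ l₂ with hL
    set P : T.V → Prop := fun v => ∃ a ∈ l₁, ∃ b ∈ l₂, T.BackAdj L a b ∧
      Relation.ReflTransGen (T.BackAdj L) b v ∧ c₁ a = c₂ b with hPdef
    have claim : ∀ u ∈ l₁, ∀ v ∈ l₂, T.BackAdj L u v →
        ∀ a ∈ l₁, ∀ b ∈ l₂, T.BackAdj L a b →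
        Relation.ReflTransGen (T.BackAdj L) b v → a = u ∧ b = v := by
      intro u hu v hv huv a ha b hb hab hbv
      refine hsep a ha b hb u hu v hv hab huv ?_
      exact (Relation.ReflTransGen.single hab).trans
        (hbv.trans (Relation.ReflTransGen.single (hsymm huv)))
    refine ⟨fun v => if v ∈ l₁ then c₁ v else (if P v then !(c₂ v) else c₂ v), ?_⟩
    simp only
    have cross : ∀ u ∈ l₁, ∀ v ∈ l₂, T.BackAdj L u v →
        c₁ u ≠ (if P v then !(c₂ v) else c₂ v) := by
      intro u hu v hv hadj
      have hPv : P v ↔ c₁ u = c₂ v := by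
        constructor
        · rintro ⟨a, ha, b, hb, hab, hbv, hcab⟩
          obtain ⟨rfl, rfl⟩ := claim u hu v hv hadj a ha b hb hab hbv
          exact hcab
        · intro hcv
          exact ⟨u, hu, v, hv, hadj, Relation.ReflTransGen.refl, hcv⟩
      by_cases hcv : c₁ u = c₂ v
      · rw [if_pos (hPv.mpr hcv), hcv]
        exact fun e => (Bool.not_ne_self (c₂ v)) e.symm
      · rw [if_neg (fun hp => hcv (hPv.mp hp))]
        exact hcv
    intro u hu v hv hadj
    rcases List.mem_append.mp hu with hu1 | hu2 <;>
      rcases List.mem_append.mp hv with hv1 | hv2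
    · rw [if_pos hu1, if_pos hv1]
      exact hc₁ u hu1 v hv1
        (T.backAdj_restrict_left (fun h => hdisj hu1 h) (fun h => hdisj hv1 h) hadj)
    · rw [if_pos hu1, if_neg (fun h => hdisj h hv2)]
      exact cross u hu1 v hv2 hadj
    · rw [if_neg (fun h => hdisj h hu2), if_pos hv1]
      exact (cross v hv1 u hu2 (T.backAdj_symm hadj)).symm
    · rw [if_neg (fun h => hdisj h hu2), if_neg (fun h => hdisj h hv2)]
      have hbase : c₂ u ≠ c₂ v := hc₂ u hu2 v hv2
        (T.backAdj_restrict_right (fun h => hdisj h hu2) (fun h => hdisj h hv2) hadj)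
      have hPuv : P u ↔ P v := by
        constructor
        · rintro ⟨a, ha, b, hb, hab, hbu, hcab⟩
          exact ⟨a, ha, b, hb, hab, hbu.trans (Relation.ReflTransGen.single hadj), hcab⟩
        · rintro ⟨a, ha, b, hb, hab, hbv, hcab⟩
          exact ⟨a, ha, b, hb, hab,
            hbv.trans (Relation.ReflTransGen.single (hsymm hadj)), hcab⟩
      by_cases hp : P u
      · rw [if_pos hp, if_pos (hPuv.mp hp)]
        intro e
        exact hbase (by simpa using congrArg (!·) e)
      · rw [if_neg hp, if_neg (fun h => hp (hPuv.mpr h))]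
        exact hbase

end Tournament

open Tournament in
/-- Every forest tournament has chromatic number at most two. -/
theorem forest_chromNum_le_two (T : Tournament) (h : T.IsForestTournament) :
    T.chromNum ≤ 2 := by
  classical
  letI : DecidableEq T.V := Classical.decEq T.V
  obtain ⟨l, hnd, hmem, hfo⟩ := h
  obtain ⟨c, hc⟩ := T.forest_coloring l hfo hnd
  apply Nat.sInf_le
  refine ⟨fun v => if c v then 1 else 0, ?_⟩
  intro i a ha b hb d hd hab hbd
  simp only [Set.mem_setOf_eq] at ha hb hd
  have hEq : ∀ x y : T.V,
      (if c x then (1 : Fin 2) else 0) = (if c y then 1 else 0) → c x = c y := by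
    intro x y hxy
    cases hx : c x <;> cases hy : c y <;> simp [hx, hy] at hxy ⊢
  have hcab : c a = c b := hEq a b (ha.trans hb.symm)
  have hcbd : c b = c d := hEq b d (hb.trans hd.symm)
  have key : ∀ x y : T.V, c x = c y → T.adj x y → [x, y].Sublist l := by
    intro x y hcxy hxy
    have hne : x ≠ y := fun e => T.irrefl y (e ▸ hxy)
    rcases pairSublistTotal (hmem x) (hmem y) hne with hs | hs
    · exact hs
    · exact absurd hcxy (hc x (hmem x) y (hmem y) (Or.inl ⟨hxy, hs⟩))
  have h1 : l.idxOf a < l.idxOf b := indexOfLtOfPairSublist hnd (key a b hcab hab)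
  have h2 : l.idxOf b < l.idxOf d := indexOfLtOfPairSublist hnd (key b d hcbd hbd)
  have hnead : a ≠ d := fun e => lt_irrefl _ (e ▸ (h1.trans h2))
  rcases T.total a d hnead with had | hda
  · exact had
  · exfalso
    have : l.idxOf d < l.idxOf a :=
      indexOfLtOfPairSublist hnd (key d a (hcbd.symm.trans hcab.symm) hda)
    exact lt_irrefl _ (this.trans (h1.trans h2))
end
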